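/- Let (X_1, σ_1) and (X_2, σ_2) be two d-dimensionally connected (d−1)-rooted simplicial complexes that are locally finite above dimension d−1. If B_{X_1}(σ_1; r) ≅ B_{X_2}(σ_2; r) for every radius r ≥ 0, then (X_1, σ_1) ≅ (X_2, σ_2). -/

import Mathlib

open MeasureTheory Filter Finset Asymptotics
open scoped ENNReal NNReal Classical

namespace RSC

/-- An abstract simplicial complex on a vertex type `V`: a collection of
nonempty finite sets closed under taking nonempty subsets. -/
structure SComplex (V : Type*) where
  faces : Set (Finset V)
  nonempty_of_mem : ∀ σ ∈ faces, σ.Nonempty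
  down_closed : ∀ σ ∈ faces, ∀ τ : Finset V, τ ⊆ σ → τ.Nonempty → τ ∈ faces

variable {V W : Type*}

/-- The set of `k`-dimensional simplices (sets of cardinality `k+1`). -/
def simplices (X : SComplex V) (k : ℕ) : Set (Finset V) :=
  {σ | σ ∈ X.faces ∧ σ.card = k + 1}

/-- `s_k(X)`, the number of `k`-dimensional simplices. -/
noncomputable def scount (X : SComplex V) (k : ℕ) : ℕ :=
  (simplices X k).ncard

/-- Two `(d-1)`-simplices are adjacent if some `d`-simplex contains both. -/
def Adj (X : SComplex V) (d : ℕ) (σ σ' : Finset V) : Prop :=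
  σ ∈ simplices X (d - 1) ∧ σ' ∈ simplices X (d - 1) ∧
    ∃ τ ∈ simplices X d, σ ⊆ τ ∧ σ' ⊆ τ

/-- `d`-dimensional connectivity of `(d-1)`-simplices (connection through
`d`-dimensional paths). -/
def Conn (X : SComplex V) (d : ℕ) (σ σ' : Finset V) : Prop :=
  σ ∈ simplices X (d - 1) ∧ σ' ∈ simplices X (d - 1) ∧
    Relation.ReflTransGen (Adj X d) σ σ'

/-- The `d`-dimensional connected component of a `(d-1)`-simplex, as the set of
`(d-1)`-simplices connected to it. -/
def component (X : SComplex V) (d : ℕ) (σ : Finset V) : Set (Finset V) :=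
  {σ' | Conn X d σ σ'}

/-- The collection of `d`-dimensional connected components. -/
def components (X : SComplex V) (d : ℕ) : Set (Set (Finset V)) :=
  {C | ∃ σ ∈ simplices X (d - 1), C = component X d σ}

/-- `s_{d-1}(C_max)`: the number of `(d-1)`-simplices of the largest
`d`-dimensional connected component. -/
noncomputable def maxCompCard (X : SComplex V) (d : ℕ) : ℕ :=
  sSup (Set.ncard '' components X d)

/-- `s_{d-1}(C_(2))`: the number of `(d-1)`-simplices of the second largest
`d`-dimensional connected component. -/
noncomputable def secondCompCard (X : SComplex V) (d : ℕ) : ℕ :=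
  sSup {m | ∃ C₁ ∈ components X d, ∃ C₂ ∈ components X d,
    C₁ ≠ C₂ ∧ m = min C₁.ncard C₂.ncard}

/-- `C` is a largest `d`-dimensional connected component. -/
def IsMaxComponent (X : SComplex V) (d : ℕ) (C : Set (Finset V)) : Prop :=
  C ∈ components X d ∧ ∀ C' ∈ components X d, C'.ncard ≤ C.ncard

/-- `C` is a second largest `d`-dimensional connected component (with respect to
some choice of a largest component, ties broken arbitrarily). -/
def IsSecondComponent (X : SComplex V) (d : ℕ) (C : Set (Finset V)) : Prop :=
  ∃ C₀, IsMaxComponent X d C₀ ∧ C ∈ components X d ∧ C ≠ C₀ ∧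
    ∀ C' ∈ components X d, C' ≠ C₀ → C'.ncard ≤ C.ncard

/-- `s_0(C)`: the number of vertices contained in simplices of a component `C`. -/
noncomputable def vertexCard (C : Set (Finset V)) : ℕ :=
  (⋃ σ ∈ C, (σ : Set V)).ncard

/-! ### Neighborhoods -/

/-- The faces of the radius-`r` neighborhood of a `(d-1)`-simplex `σ₀`,
with respect to `d`-dimensional adjacency. -/
def ballFaces (X : SComplex V) (d : ℕ) (σ₀ : Finset V) : ℕ → Set (Finset V)
  | 0 => {ρ | ρ ⊆ σ₀ ∧ ρ.Nonempty}
  | r + 1 => ballFaces X d σ₀ r ∪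
      {ρ | ρ.Nonempty ∧ ∃ τ ∈ simplices X d,
        (∃ σ ∈ simplices X (d - 1), σ ∈ ballFaces X d σ₀ r ∧ σ ⊆ τ) ∧ ρ ⊆ τ}

lemma ballFaces_down (X : SComplex V) (d : ℕ) (σ₀ : Finset V) :
    ∀ r, ∀ ρ ∈ ballFaces X d σ₀ r, ∀ π : Finset V, π ⊆ ρ → π.Nonempty →
      π ∈ ballFaces X d σ₀ r := by
  intro r
  induction r with
  | zero =>
    rintro ρ ⟨h1, -⟩ π hsub hne
    exact ⟨hsub.trans h1, hne⟩
  | succ r ih =>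
    rintro ρ (h | ⟨-, τ, hτ, hσ, hρτ⟩) π hsub hne
    · exact Or.inl (ih ρ h π hsub hne)
    · exact Or.inr ⟨hne, τ, hτ, hσ, hsub.trans hρτ⟩

/-- The radius-`r` neighborhood `B_X(σ₀; r)` of a `(d-1)`-simplex `σ₀`,
as a simplicial complex. -/
def ball (X : SComplex V) (d : ℕ) (σ₀ : Finset V) (r : ℕ) : SComplex V where
  faces := X.faces ∩ ballFaces X d σ₀ r
  nonempty_of_mem := fun σ h => X.nonempty_of_mem σ h.1
  down_closed := fun σ h τ hsub hne =>
    ⟨X.down_closed σ h.1 τ hsub hne, ballFaces_down X d σ₀ r σ h.2 τ hsub hne⟩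

/-! ### Rooted complexes and isomorphisms -/

/-- A rooted simplicial complex. -/
structure Rooted (V : Type*) where
  cplx : SComplex V
  root : Finset V

/-- Isomorphism of rooted simplicial complexes: a bijection of vertex sets
preserving all simplices and mapping root to root. -/
def Iso (A : Rooted V) (B : Rooted W) : Prop :=
  ∃ φ : V → W, Set.InjOn φ {v | ({v} : Finset V) ∈ A.cplx.faces} ∧
    (∀ σ ∈ A.cplx.faces, σ.image φ ∈ B.cplx.faces) ∧
    (∀ τ ∈ B.cplx.faces, ∃ σ ∈ A.cplx.faces, σ.image φ = τ) ∧
    A.root.image φ = B.root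

/-- The rooted radius-`r` neighborhood of the root of a rooted complex. -/
def ballOf (A : Rooted V) (d : ℕ) (r : ℕ) : Rooted V :=
  ⟨ball A.cplx d A.root r, A.root⟩

/-! ### Local weak convergence in probability -/

/-- Local weak convergence in probability of a sequence of random finite
`d`-dimensional simplicial complexes to a random `(d-1)`-rooted simplicial
complex `Y` defined on a probability space `(Ω', ν)`. -/
def ConvLWCinP {Ω : ℕ → Type*} [∀ n, MeasurableSpace (Ω n)]
    (μ : ∀ n, Measure (Ω n)) {Vn : ℕ → Type*}
    (X : ∀ n, Ω n → SComplex (Vn n)) (d : ℕ)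
    {Ω' : Type*} [MeasurableSpace Ω'] (ν : Measure Ω') (Y : Ω' → Rooted ℕ) : Prop :=
  ∀ (r : ℕ) (H : Rooted ℕ), ∀ ε > (0 : ℝ),
    Tendsto (fun n => ((μ n) {ω |
        ε < |(Set.ncard {σ | σ ∈ simplices (X n ω) (d - 1) ∧
                Iso (ballOf ⟨X n ω, σ⟩ d r) H} : ℝ) / (scount (X n ω) (d - 1) : ℝ)
              - (ν {ω' | Iso (ballOf (Y ω') d r) H}).toReal|}).toReal)
      atTop (nhds 0)

/-! ### The multi-parameter random simplicial complex -/

/-- Bernoulli measure with success probability `p` on `Bool`. -/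
noncomputable def bern (p : ℝ) : Measure Bool :=
  (PMF.bernoulli (min (Real.toNNReal p) 1) (min_le_right _ _)).toMeasure

instance (p : ℝ) : IsProbabilityMeasure (bern p) :=
  PMF.toMeasure.isProbabilityMeasure _

/-- The law of the independent coins deciding the presence of simplices:
the coin of a potential `k`-dimensional simplex `σ` (with `σ.card = k+1`)
has success probability `p k`. -/
noncomputable def coinMeasure (n : ℕ) (p : ℕ → ℝ) :
    Measure (Finset (Fin n) → Bool) :=
  Measure.pi fun σ => bern (p (σ.card - 1))

instance (n : ℕ) (p : ℕ → ℝ) : IsProbabilityMeasure (coinMeasure n p) := by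
  unfold coinMeasure; infer_instance

/-- The multi-parameter random simplicial complex `MRSC_d(n; p)` built from
the independent coins `ω`: a simplex of dimension `≤ d` is present iff the
coins of all its faces of dimension `≥ 1` are successes. -/
noncomputable def mrscComplex (d n : ℕ) (ω : Finset (Fin n) → Bool) :
    SComplex (Fin n) where
  faces := {σ | σ.Nonempty ∧ σ.card ≤ d + 1 ∧ ∀ τ ⊆ σ, 2 ≤ τ.card → ω τ = true}
  nonempty_of_mem := fun _ h => h.1
  down_closed := fun _ h _ hsub hne =>
    ⟨hne, le_trans (Finset.card_le_card hsub) h.2.1,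
      fun ρ hρ h2 => h.2.2 ρ (hρ.trans hsub) h2⟩

/-- Parameters of the Linial–Meshulam complex `LM_d(n, lam/n)` seen as a
multi-parameter random simplicial complex. -/
noncomputable def lmParam (d : ℕ) (lam : ℝ) (n : ℕ) : ℕ → ℝ :=
  fun k => if k = d then lam / n else 1

/-- Parameters of `MRSC_2(n; p₁, p₂)`. -/
noncomputable def mrsc2Param (p₁ p₂ : ℕ → ℝ) (n : ℕ) : ℕ → ℝ :=
  fun k => if k = 1 then p₁ n else if k = 2 then p₂ n else 1

/-- `q_d`, the probability that a fixed `(d-1)`-simplex is present. -/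
noncomputable def qParam (d : ℕ) (p : ℕ → ℝ) : ℝ :=
  ∏ k ∈ Finset.Icc 1 (d - 1), p k ^ d.choose (k + 1)

/-- `r_d`, the conditional probability that a fixed `d`-simplex containing a
present `(d-1)`-simplex is present. -/
noncomputable def rParam (d : ℕ) (p : ℕ → ℝ) : ℝ :=
  ∏ k ∈ Finset.Icc 1 d, p k ^ d.choose k

/-- Conditional probability `P(A | B)`. -/
noncomputable def condProb {Ω : Type*} [MeasurableSpace Ω]
    (μ : Measure Ω) (A B : Set Ω) : ℝ :=
  (μ (A ∩ B)).toReal / (μ B).toReal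

/-- `I_lam = lam - 1 - log lam`, the large deviation rate function of the
Poisson distribution. -/
noncomputable def Ifun (lam : ℝ) : ℝ := lam - 1 - Real.log lam

/-- `γ_lam`: the smallest solution in `[0,1]` of `γ = exp (-lam (1 - γ^d))`,
i.e. the extinction probability of a branching process with offspring
distribution `d · Poi(lam)`. -/
noncomputable def gammaLam (d : ℕ) (lam : ℝ) : ℝ :=
  sInf {γ : ℝ | γ ∈ Set.Icc (0 : ℝ) 1 ∧ γ = Real.exp (-lam * (1 - γ ^ d))}


/-! ### Breadth-first exploration -/

/-- Insert an element into a list sorted according to `key`. -/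
def insertKey {α : Type*} (key : α → ℕ) (a : α) : List α → List α
  | [] => [a]
  | b :: t => if key a ≤ key b then a :: b :: t else b :: insertKey key a t

/-- Sort a list according to an injective key (a fixed linear order). -/
def sortByKey {α : Type*} (key : α → ℕ) (l : List α) : List α :=
  l.foldr (insertKey key) []

/-- One step of the breadth-first exploration of a `d`-dimensional connected
component.  A state consists of the set of faces discovered so far together
with the queue of active `(d-1)`-simplices; at each step the first active
`(d-1)`-simplex is explored: all new `d`-simplices containing it (and whose
new vertices avoid `avoid`) are detected, their faces are added to the
discovered set, and the newly detected `(d-1)`-simplices are appended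
(in the fixed linear order given by `key`) to the queue. -/
noncomputable def exploreStep [Fintype V] [DecidableEq V] (key : Finset V → ℕ)
    (X : SComplex V) (d : ℕ) (avoid : Set V) :
    Set (Finset V) × List (Finset V) → Set (Finset V) × List (Finset V)
  | (vis, []) => (vis, [])
  | (vis, σ :: rest) =>
    let newTri : Set (Finset V) :=
      {τ | τ ∈ X.faces ∧ τ.card = d + 1 ∧ σ ⊆ τ ∧ τ ∉ vis ∧
        ∀ v ∈ τ, v ∉ σ → v ∉ avoid}
    let vis' := vis ∪ {ρ | ρ.Nonempty ∧ ∃ τ ∈ newTri, ρ ⊆ τ}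
    let newAct : Finset (Finset V) :=
      Finset.univ.filter fun σ' => σ'.card = d ∧ σ' ∉ vis ∧ ∃ τ ∈ newTri, σ' ⊆ τ
    (vis', rest ++ sortByKey key newAct.toList)

/-- The breadth-first exploration started from a given initial state. -/
noncomputable def exploreFrom [Fintype V] [DecidableEq V] (key : Finset V → ℕ)
    (X : SComplex V) (d : ℕ) (avoid : Set V)
    (init : Set (Finset V) × List (Finset V)) (k : ℕ) :
    Set (Finset V) × List (Finset V) :=
  (exploreStep key X d avoid)^[k] init

/-- The breadth-first exploration of the `d`-dimensional connected component of
the `(d-1)`-simplex `σ₀`; `(explore key X d σ₀ k).1` is the complex `𝒳_k`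
discovered after `k` steps and `(explore key X d σ₀ k).2` is the queue of
active `(d-1)`-simplices. -/
noncomputable def explore [Fintype V] [DecidableEq V] (key : Finset V → ℕ)
    (X : SComplex V) (d : ℕ) (σ₀ : Finset V) (k : ℕ) :
    Set (Finset V) × List (Finset V) :=
  exploreFrom key X d ∅ ({ρ | ρ ⊆ σ₀ ∧ ρ.Nonempty}, [σ₀]) k

/-- Number of edges (`(d-1)=1`-simplices when `d = 2`) in the ball `B_X(σ; r)`;
more generally the number of `(d-1)`-simplices. -/
noncomputable def ballEdgeCount (X : SComplex V) (d : ℕ) (σ : Finset V) (r : ℕ) : ℕ :=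
  Set.ncard {τ | τ ∈ (ball X d σ r).faces ∧ τ.card = d}

/-- Number of `(d-1)`-simplices in the boundary `∂B_X(σ; r)`. -/
noncomputable def bdryEdgeCount (X : SComplex V) (d : ℕ) (σ : Finset V) (r : ℕ) : ℕ :=
  Set.ncard {τ | τ ∈ (ball X d σ r).faces ∧ τ.card = d ∧
    τ ∉ (ball X d σ (r - 1)).faces}

/-- The vertex set of the ball `B_X(σ; r)`. -/
def ballVerts (X : SComplex V) (d : ℕ) (σ : Finset V) (r : ℕ) : Set V :=
  {v | ({v} : Finset V) ∈ (ball X d σ r).faces}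

/-- The breadth-first exploration started from the ball `B_X(σ₀; r)` fully
explored, with the `(d-1)`-simplices of its boundary active, avoiding the
vertex set `avoid`. -/
noncomputable def exploreBall [Fintype V] [DecidableEq V] (key : Finset V → ℕ)
    (X : SComplex V) (d : ℕ) (avoid : Set V) (σ₀ : Finset V) (r k : ℕ) :
    Set (Finset V) × List (Finset V) :=
  exploreFrom key X d avoid
    ((ball X d σ₀ r).faces,
      sortByKey key ((Finset.univ.filter fun τ : Finset V =>
        τ.card = d ∧ τ ∈ (ball X d σ₀ r).faces ∧
          τ ∉ (ball X d σ₀ (r - 1)).faces).toList)) k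

/-- `deg_{c-1, m}^T (ρ)`: the number of `m`-dimensional simplices
(sets of cardinality `m+1`) in the collection `T` containing `ρ`. -/
noncomputable def degIn (T : Set (Finset V)) (ρ : Finset V) (m : ℕ) : ℕ :=
  Set.ncard {τ | τ ∈ T ∧ τ.card = m + 1 ∧ ρ ⊆ τ}

/-- `max_{ρ ∈ S_{c-1}(T)} deg_{c-1, m}^T (ρ)`. -/
noncomputable def maxDegIn (T : Set (Finset V)) (c m : ℕ) : ℕ :=
  sSup ((fun ρ => degIn T ρ m) '' {ρ | ρ ∈ T ∧ ρ.card = c})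

/-- `s_0(T)`: the number of vertices of the collection of faces `T`. -/
noncomputable def vertsOf (T : Set (Finset V)) : ℕ :=
  Set.ncard {v : V | ({v} : Finset V) ∈ T}

/-- The canonical face `{0, …, c-1}` in `Fin n`. -/
def canonFace (n c : ℕ) : Finset (Fin n) :=
  Finset.univ.filter fun i => (i : ℕ) < c

/-- The canonical `ℓ`-dimensional face `{0, …, ℓ-1, d}` in `Fin n`;
it is contained in the canonical `d`-simplex but not in the canonical
`(d-1)`-simplex. -/
def canonRho (n ℓ d : ℕ) : Finset (Fin n) :=
  Finset.univ.filter fun i => (i : ℕ) < ℓ ∨ (i : ℕ) = d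

/-- `p_{d,ℓ} = P(τ ∈ X_n | σ, ρ ∈ X_n)` for simplices `τ, σ, ρ` of dimensions
`d`, `d-1` and `ℓ` respectively with `σ, ρ ⊆ τ` and `ρ ⊄ σ`. -/
noncomputable def pdl (d n : ℕ) (p : ℕ → ℝ) (ℓ : ℕ) : ℝ :=
  condProb (coinMeasure n p)
    {ω | canonFace n (d + 1) ∈ (mrscComplex d n ω).faces}
    {ω | canonFace n d ∈ (mrscComplex d n ω).faces ∧
         canonRho n ℓ d ∈ (mrscComplex d n ω).faces}

/-- The quantity `p_k^F` of Lemma 3.2 (forward estimate), with `e` the `o(1)`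
error term. -/
noncomputable def pkFval (d n : ℕ) (p : ℕ → ℝ) (lam e : ℝ) (k : ℕ)
    (T : Set (Finset (Fin n))) (σk : Finset (Fin n)) : ℝ :=
  (1 - ((k : ℝ) - 1) * lam / n -
      ∑ ℓ ∈ Finset.Icc 1 (d - 1),
        ∑ ρ ∈ σk.powerset.filter (fun ρ => ρ.card = ℓ),
          (degIn T ρ (d - 1) : ℝ) * pdl d n p ℓ) * (lam / n + e)

/-- The quantity `p_k^B` of Lemma 3.3 (backward estimate), with `e` the `o(1)`
error term. -/
noncomputable def pkBval (d n : ℕ) (p : ℕ → ℝ) (lam e : ℝ)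
    (T : Set (Finset (Fin n))) (σk : Finset (Fin n)) : ℝ :=
  (1 - ∑ ℓ ∈ Finset.Icc 1 (d - 1),
        ∑ ρ ∈ σk.powerset.filter (fun ρ => ρ.card = ℓ),
          (degIn T ρ (d - 1) : ℝ) * pdl d n p ℓ) * (lam / n + e)

/-- `F_k`: `d` times the number of forward `d`-simplices detected when
exploring `σk` from the state with discovered faces `T`, i.e. the number of
new forward `(d-1)`-simplices. -/
noncomputable def forwardCount (d n : ℕ) (Xc : SComplex (Fin n))
    (T : Set (Finset (Fin n))) (σk : Finset (Fin n)) : ℕ :=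
  d * Set.ncard {v : Fin n | ({v} : Finset (Fin n)) ∉ T ∧
    insert v σk ∈ Xc.faces}

/-- `B_k`: `d` times the number of backward `d`-simplices detected when
exploring `σk` from the state with discovered faces `T`, i.e. the number of
new backward `(d-1)`-simplices. -/
noncomputable def backwardCount (d n : ℕ) (Xc : SComplex (Fin n))
    (T : Set (Finset (Fin n))) (σk : Finset (Fin n)) : ℕ :=
  d * Set.ncard {v : Fin n | ({v} : Finset (Fin n)) ∈ T ∧ v ∉ σk ∧
    (∀ ρ : Finset (Fin n), ρ ⊆ insert v σk → ρ.card = d → v ∈ ρ → ρ ∉ T) ∧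
    insert v σk ∈ Xc.faces}

/-- The probability `P(Bin(m, q) = j)`. -/
noncomputable def binomPMF (m : ℕ) (q : ℝ) (j : ℕ) : ℝ :=
  m.choose j * q ^ j * (1 - q) ^ (m - j)

/-- The upper tail `P(d · Bin(m, q) ≥ t)` of `d` times a binomial random
variable. -/
noncomputable def scaledBinomTail (d m : ℕ) (q : ℝ) (t : ℕ) : ℝ :=
  ∑ j ∈ Finset.range (m + 1), if t ≤ d * j then binomPMF m q j else 0

/-! ### The `(d-1)`-rooted Poisson tree and Galton–Watson trees -/

/-- The fresh vertex attached to the tree node encoded by `l`. -/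
def apex (d : ℕ) (l : List ℕ) : ℕ := d + Encodable.encode l

/-- The `(d-1)`-simplex of the node of the `(d-1)`-rooted tree indexed by
the path `l` (most recent step first): the root is `{0, …, d-1}` and the node
`c :: l` is obtained from the node `l` by attaching the fresh vertex
`apex d (c / d :: l)` of its `(c / d)`-th child `d`-simplex and removing its
`(c % d)`-th smallest vertex. -/
def nodeSimplex (d : ℕ) : List ℕ → Finset ℕ
  | [] => Finset.range d
  | c :: l =>
    ((nodeSimplex d l).erase (((nodeSimplex d l).sort (· ≤ ·)).getD (c % d) 0))
      ∪ {apex d (c / d :: l)}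

/-- Which nodes are present, given the number `N l` of child `d`-simplices of
every node `l`: each child `d`-simplex carries `d` child `(d-1)`-simplices. -/
def nodePresent (d : ℕ) (N : List ℕ → ℕ) : List ℕ → Prop
  | [] => True
  | c :: l => nodePresent d N l ∧ c < d * N l

/-- The `(d-1)`-rooted tree complex built from the family of offspring numbers
`N`: when every `N l` is an independent `Poisson(lam)` random variable this is
the `(d-1)`-rooted Poisson tree with parameter `lam`. -/
def poissonTreeComplex (d : ℕ) (N : List ℕ → ℕ) : SComplex ℕ where
  faces := {ρ | ρ.Nonempty ∧ (ρ ⊆ Finset.range d ∨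
    ∃ l i, nodePresent d N l ∧ i < N l ∧
      ρ ⊆ nodeSimplex d l ∪ {apex d (i :: l)})}
  nonempty_of_mem := fun _ h => h.1
  down_closed := by
    rintro σ ⟨h1, h2⟩ τ hsub hne
    refine ⟨hne, ?_⟩
    rcases h2 with h | ⟨l, i, h3, h4, h5⟩
    · exact Or.inl (hsub.trans h)
    · exact Or.inr ⟨l, i, h3, h4, hsub.trans h5⟩

/-- The `(d-1)`-rooted Poisson tree (as a rooted complex) built from the
offspring numbers `N`. -/
def poissonTreeRooted (d : ℕ) (N : List ℕ → ℕ) : Rooted ℕ :=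
  ⟨poissonTreeComplex d N, Finset.range d⟩

/-- The Poisson probability mass function `e^{-lam} lam^m / m!`. -/
noncomputable def poiPMF (lam : ℝ) (m : ℕ) : ℝ :=
  Real.exp (-lam) * lam ^ m / (Nat.factorial m)

/-- The probability mass function of `d` times a `Poisson(lam)` random
variable. -/
noncomputable def dPoiPMF (d : ℕ) (lam : ℝ) (m : ℕ) : ℝ :=
  if d ∣ m then Real.exp (-lam) * lam ^ (m / d) / (Nat.factorial (m / d)) else 0

/-- The family tree of a Galton–Watson branching process whose individuals `l`
have `N l` children: the set of individuals ever produced. -/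
def gwTree (N : List ℕ → ℕ) : Set (List ℕ) :=
  {l | nodePresent 1 N l}

/-- The restricted generating function
`G(z) = E[z^C · 1_{C < ∞}]` of the total progeny `C` of the Galton–Watson
process with offspring numbers `N`. -/
noncomputable def gwGen {Ω : Type*} [MeasurableSpace Ω] (μ : Measure Ω)
    (N : Ω → List ℕ → ℕ) (z : ℝ) : ℝ :=
  ∫ ω, (if (gwTree (N ω)).Finite then z ^ (gwTree (N ω)).ncard else 0) ∂μ

/-- `1 / s_{d-1}(C(o))` for a rooted complex, with the convention that it is
`0` for an infinite component. -/
noncomputable def invCompCard (d : ℕ) (A : Rooted ℕ) : ℝ :=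
  if (component A.cplx d A.root).Finite then
    1 / ((component A.cplx d A.root).ncard : ℝ) else 0

/-! ### The metric space of rooted complexes -/

/-- `X` is locally finite above dimension `d-1`: every simplex of dimension
`≥ d-1` (cardinality `≥ d`) is contained in finitely many simplices of the
next dimension. -/
def LocallyFinite (X : SComplex V) (d : ℕ) : Prop :=
  ∀ σ ∈ X.faces, d ≤ σ.card →
    {τ | τ ∈ X.faces ∧ σ ⊆ τ ∧ τ.card = σ.card + 1}.Finite

/-- `X` is `d`-dimensionally connected: every pair of `(d-1)`-simplices is
joined by a `d`-dimensional path, and every face is contained in some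
`(d-1)`-simplex. -/
def DConnected (X : SComplex V) (d : ℕ) : Prop :=
  (∀ σ ∈ simplices X (d - 1), ∀ σ' ∈ simplices X (d - 1), Conn X d σ σ') ∧
    ∀ ρ ∈ X.faces, ∃ σ ∈ simplices X (d - 1), ρ ⊆ σ

/-- A member of the space `S_{d-1}`: a `(d-1)`-rooted, `d`-dimensionally
connected simplicial complex that is locally finite above dimension `d-1`. -/
def GoodRooted (d : ℕ) (A : Rooted ℕ) : Prop :=
  A.root ∈ simplices A.cplx (d - 1) ∧ LocallyFinite A.cplx d ∧
    DConnected A.cplx d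

/-- The local distance `1 / (1 + R*)` on rooted simplicial complexes, where
`R* = sup {R | B(σ₁; R) ≅ B(σ₂; R)}` (the distance being `0` if all
neighborhoods are isomorphic). -/
noncomputable def rdist (d : ℕ) (A B : Rooted ℕ) : ℝ :=
  if ∀ R : ℕ, Iso (ballOf A d R) (ballOf B d R) then 0
  else
    1 / (1 + ((sSup {R : ℕ | Iso (ballOf A d R) (ballOf B d R)} : ℕ) : ℝ))


/-! ### Auxiliary lemmas for Statement 18 -/

section Aux18

variable {V₀ W₀ : Type*}

lemma ballFaces_mono (X : SComplex V₀) (d : ℕ) (σ₀ : Finset V₀) {r r' : ℕ} (h : r ≤ r') :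
    ballFaces X d σ₀ r ⊆ ballFaces X d σ₀ r' := by
  induction h with
  | refl => exact subset_rfl
  | step h ih => exact ih.trans fun ρ hρ => Or.inl hρ

lemma card_of_root {X : SComplex V₀} {d : ℕ} (hd : 1 ≤ d) {σ : Finset V₀}
    (h : σ ∈ simplices X (d - 1)) : σ.card = d := by
  have := h.2; omega

lemma nonempty_of_root {X : SComplex V₀} {d : ℕ} (hd : 1 ≤ d) {σ : Finset V₀}
    (h : σ ∈ simplices X (d - 1)) : σ.Nonempty :=
  Finset.card_pos.mp (by rw [card_of_root hd h]; exact hd)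

lemma ballFaces_finite (X : SComplex V₀) {d : ℕ} (hd : 1 ≤ d) (σ₀ : Finset V₀)
    (hlf : LocallyFinite X d) : ∀ r, (ballFaces X d σ₀ r).Finite := by
  intro r
  induction r with
  | zero =>
    apply Set.Finite.subset (σ₀.powerset : Finset (Finset V₀)).finite_toSet
    rintro ρ ⟨h1, -⟩
    simpa [Finset.mem_powerset] using h1
  | succ r ih =>
    apply Set.Finite.union ih
    have hT : {τ : Finset V₀ | τ ∈ simplices X d ∧ ∃ σ ∈ simplices X (d - 1),
        σ ∈ ballFaces X d σ₀ r ∧ σ ⊆ τ}.Finite := by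
      have hsub : {τ : Finset V₀ | τ ∈ simplices X d ∧ ∃ σ ∈ simplices X (d - 1),
          σ ∈ ballFaces X d σ₀ r ∧ σ ⊆ τ} ⊆
          ⋃ σ ∈ {σ | σ ∈ simplices X (d - 1) ∧ σ ∈ ballFaces X d σ₀ r},
            {τ | τ ∈ X.faces ∧ σ ⊆ τ ∧ τ.card = σ.card + 1} := by
        rintro τ ⟨hτ, σ, hσ, hσb, hστ⟩
        refine Set.mem_biUnion ⟨hσ, hσb⟩ ⟨hτ.1, hστ, ?_⟩
        rw [hτ.2, card_of_root hd hσ]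
      refine Set.Finite.subset (Set.Finite.biUnion
        (ih.subset fun σ hσ => hσ.2) ?_) hsub
      rintro σ ⟨hσ, -⟩
      exact hlf σ hσ.1 (le_of_eq (card_of_root hd hσ).symm)
    apply Set.Finite.subset
      (hT.biUnion fun τ _ => (τ.powerset : Finset (Finset V₀)).finite_toSet)
    rintro ρ ⟨hne, τ, hτ, ⟨σ, hσ, hσb, hστ⟩, hρτ⟩
    exact Set.mem_biUnion ⟨hτ, σ, hσ, hσb, hστ⟩
      (by simpa [Finset.mem_powerset] using hρτ)

lemma ballVerts_finite (X : SComplex V₀) {d : ℕ} (hd : 1 ≤ d) (σ₀ : Finset V₀)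
    (hlf : LocallyFinite X d) (r : ℕ) : (ballVerts X d σ₀ r).Finite := by
  apply Set.Finite.of_finite_image (f := fun v => ({v} : Finset V₀))
  · apply (ballFaces_finite X hd σ₀ hlf r).subset
    rintro τ ⟨v, hv, rfl⟩
    exact hv.2
  · intro a _ b _ h
    simpa using h

lemma subset_verts {Y : SComplex V₀} {ρ : Finset V₀} (h : ρ ∈ Y.faces) :
    ↑ρ ⊆ {v | ({v} : Finset V₀) ∈ Y.faces} := fun v hv =>
  Y.down_closed ρ h {v} (Finset.singleton_subset_iff.mpr hv) (Finset.singleton_nonempty v)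

lemma reflect_subset {φ : V₀ → W₀} {S : Set V₀} (hinj : Set.InjOn φ S)
    {a b : Finset V₀} (ha : ↑a ⊆ S) (hb : ↑b ⊆ S)
    (h : a.image φ ⊆ b.image φ) : a ⊆ b := by
  intro v hv
  obtain ⟨u, hu, huv⟩ := Finset.mem_image.mp (h (Finset.mem_image_of_mem φ hv))
  rwa [hinj (hb hu) (ha hv) huv] at hu

/-- The key restriction lemma: an isomorphism of balls of radius `R` restricts
to an isomorphism of the balls of any radius `s ≤ R`. -/
lemma iso_ball_restrict {d : ℕ} (hd : 1 ≤ d)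
    (X₁ : SComplex V₀) (σ₁ : Finset V₀) (X₂ : SComplex W₀) (σ₂ : Finset W₀)
    (R : ℕ) (φ : V₀ → W₀)
    (hinj : Set.InjOn φ {v | ({v} : Finset V₀) ∈ (ball X₁ d σ₁ R).faces})
    (hfwd : ∀ ρ ∈ (ball X₁ d σ₁ R).faces, ρ.image φ ∈ (ball X₂ d σ₂ R).faces)
    (hsurj : ∀ τ ∈ (ball X₂ d σ₂ R).faces, ∃ ρ ∈ (ball X₁ d σ₁ R).faces, ρ.image φ = τ)
    (hroot : σ₁.image φ = σ₂) (hroot₁ : σ₁ ∈ simplices X₁ (d - 1)) :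
    ∀ s, s ≤ R →
      (∀ ρ ∈ (ball X₁ d σ₁ s).faces, ρ.image φ ∈ (ball X₂ d σ₂ s).faces) ∧
      (∀ τ ∈ (ball X₂ d σ₂ s).faces, ∃ ρ ∈ (ball X₁ d σ₁ s).faces, ρ.image φ = τ) := by
  have hmemR : ∀ {s : ℕ}, s ≤ R → ∀ {ρ : Finset V₀},
      ρ ∈ (ball X₁ d σ₁ s).faces → ρ ∈ (ball X₁ d σ₁ R).faces :=
    fun {s} hs {ρ} hρ => ⟨hρ.1, ballFaces_mono X₁ d σ₁ hs hρ.2⟩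
  have hmemR₂ : ∀ {s : ℕ}, s ≤ R → ∀ {τ : Finset W₀},
      τ ∈ (ball X₂ d σ₂ s).faces → τ ∈ (ball X₂ d σ₂ R).faces :=
    fun {s} hs {τ} hτ => ⟨hτ.1, ballFaces_mono X₂ d σ₂ hs hτ.2⟩
  have hcard : ∀ {ρ : Finset V₀}, ρ ∈ (ball X₁ d σ₁ R).faces →
      (ρ.image φ).card = ρ.card :=
    fun hρ => Finset.card_image_of_injOn (hinj.mono (subset_verts hρ))
  intro s
  induction s with
  | zero =>
    intro hs
    constructor
    · rintro ρ ⟨h1, h2, h3⟩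
      exact ⟨(hfwd ρ (hmemR hs ⟨h1, h2, h3⟩)).1,
        by rw [← hroot]; exact Finset.image_subset_image h2, h3.image φ⟩
    · rintro τ ⟨h1, h2, h3⟩
      obtain ⟨ρ, hρ, hρim⟩ := hsurj τ ⟨h1, ballFaces_mono X₂ d σ₂ (Nat.zero_le R) ⟨h2, h3⟩⟩
      have hσ₁R : σ₁ ∈ (ball X₁ d σ₁ R).faces :=
        ⟨hroot₁.1, ballFaces_mono X₁ d σ₁ (Nat.zero_le R)
          ⟨subset_rfl, nonempty_of_root hd hroot₁⟩⟩
      refine ⟨ρ, ⟨hρ.1, ?_, X₁.nonempty_of_mem ρ hρ.1⟩, hρim⟩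
      exact reflect_subset hinj (subset_verts hρ) (subset_verts hσ₁R)
        (by rw [hρim, hroot]; exact h2)
  | succ s ih =>
    intro hs
    obtain ⟨ihF, ihB⟩ := ih (le_trans (Nat.le_succ s) hs)
    constructor
    · rintro ρ ⟨hρf, (h | ⟨hne, τ, hτ, ⟨σ, hσ, hσb, hστ⟩, hρτ⟩)⟩
      · obtain ⟨h1, h2⟩ := ihF ρ ⟨hρf, h⟩
        exact ⟨h1, Or.inl h2⟩
      · have hτne : τ.Nonempty := X₁.nonempty_of_mem τ hτ.1
        have hτR : τ ∈ (ball X₁ d σ₁ R).faces :=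
          hmemR hs ⟨hτ.1, Or.inr ⟨hτne, τ, hτ, ⟨σ, hσ, hσb, hστ⟩, subset_rfl⟩⟩
        have hτim : (τ.image φ).card = d + 1 := by rw [hcard hτR]; exact hτ.2
        have hσball := ihF σ ⟨hσ.1, hσb⟩
        have hσim : (σ.image φ).card = d - 1 + 1 := by
          rw [hcard (hmemR (le_trans (Nat.le_succ s) hs) ⟨hσ.1, hσb⟩)]; exact hσ.2
        refine ⟨(hfwd ρ (hmemR hs
            ⟨hρf, Or.inr ⟨hne, τ, hτ, ⟨σ, hσ, hσb, hστ⟩, hρτ⟩⟩)).1,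
          Or.inr ⟨hne.image φ, τ.image φ, ⟨(hfwd τ hτR).1, hτim⟩,
            ⟨σ.image φ, ⟨hσball.1, hσim⟩, hσball.2, Finset.image_subset_image hστ⟩,
            Finset.image_subset_image hρτ⟩⟩
    · rintro τ' ⟨hf, (h | ⟨hne, τ₂, hτ₂, ⟨σ₂', hσ₂', hσ₂b, hσ₂τ⟩, hτ'τ⟩)⟩
      · obtain ⟨ρ, hρ, hρim⟩ := ihB τ' ⟨hf, h⟩
        exact ⟨ρ, ⟨hρ.1, Or.inl hρ.2⟩, hρim⟩
      · have hτ₂ne : τ₂.Nonempty := X₂.nonempty_of_mem τ₂ hτ₂.1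
        have hτ₂R : τ₂ ∈ (ball X₂ d σ₂ R).faces :=
          hmemR₂ hs ⟨hτ₂.1, Or.inr ⟨hτ₂ne, τ₂, hτ₂, ⟨σ₂', hσ₂', hσ₂b, hσ₂τ⟩, subset_rfl⟩⟩
        obtain ⟨τ₁, hτ₁, hτ₁im⟩ := hsurj τ₂ hτ₂R
        have hτ₁card : τ₁.card = d + 1 := by
          rw [← hcard hτ₁, hτ₁im]; exact hτ₂.2
        obtain ⟨σ₁', hσ₁', hσ₁im⟩ := ihB σ₂' ⟨hσ₂'.1, hσ₂b⟩
        have hσ₁R : σ₁' ∈ (ball X₁ d σ₁ R).faces :=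
          hmemR (le_trans (Nat.le_succ s) hs) hσ₁'
        have hσ₁card : σ₁'.card = d - 1 + 1 := by
          rw [← hcard hσ₁R, hσ₁im]; exact hσ₂'.2
        have hσ₁τ₁ : σ₁' ⊆ τ₁ :=
          reflect_subset hinj (subset_verts hσ₁R) (subset_verts hτ₁)
            (by rw [hσ₁im, hτ₁im]; exact hσ₂τ)
        have hτ'R : τ' ∈ (ball X₂ d σ₂ R).faces :=
          hmemR₂ hs ⟨hf, Or.inr ⟨hne, τ₂, hτ₂, ⟨σ₂', hσ₂', hσ₂b, hσ₂τ⟩, hτ'τ⟩⟩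
        obtain ⟨ρ, hρ, hρim⟩ := hsurj τ' hτ'R
        have hρτ₁ : ρ ⊆ τ₁ :=
          reflect_subset hinj (subset_verts hρ) (subset_verts hτ₁)
            (by rw [hρim, hτ₁im]; exact hτ'τ)
        exact ⟨ρ, ⟨hρ.1, Or.inr ⟨X₁.nonempty_of_mem ρ hρ.1, τ₁, ⟨hτ₁.1, hτ₁card⟩,
          ⟨σ₁', ⟨hσ₁'.1, hσ₁card⟩, hσ₁'.2, hσ₁τ₁⟩, hρτ₁⟩⟩, hρim⟩

lemma exists_ball_radius {d : ℕ} (hd : 1 ≤ d) (X : SComplex V₀) (σ₀ : Finset V₀)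
    (hroot : σ₀ ∈ simplices X (d - 1)) (hconn : DConnected X d) :
    ∀ ρ ∈ X.faces, ∃ r, ρ ∈ ballFaces X d σ₀ r := by
  intro ρ hρ
  obtain ⟨σ', hσ', hρσ'⟩ := hconn.2 ρ hρ
  obtain ⟨-, -, hpath⟩ := hconn.1 σ₀ hroot σ' hσ'
  suffices h : ∃ r, σ' ∈ ballFaces X d σ₀ r by
    obtain ⟨r, hr⟩ := h
    exact ⟨r, ballFaces_down X d σ₀ r σ' hr ρ hρσ' (X.nonempty_of_mem ρ hρ)⟩
  clear hρσ' hσ'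
  induction hpath with
  | refl => exact ⟨0, subset_rfl, nonempty_of_root hd hroot⟩
  | tail hab hbc ih =>
    obtain ⟨r, hr⟩ := ih
    obtain ⟨hb, hc, τ, hτ, hbτ, hcτ⟩ := hbc
    exact ⟨r + 1, Or.inr ⟨X.nonempty_of_mem _ hc.1, τ, hτ, ⟨_, hb, hr, hbτ⟩, hcτ⟩⟩

lemma ultra_const {α : Type*} (U : Ultrafilter ℕ) (f : ℕ → α) {A : Set ℕ}
    (hA : A ∈ U) {T : Set α} (hT : T.Finite) (hrange : ∀ r ∈ A, f r ∈ T) :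
    ∃ a, {r | f r = a} ∈ U := by
  have hmem : (⋃ a ∈ T, {r | f r = a}) ∈ U :=
    Filter.mem_of_superset hA fun r hr => Set.mem_biUnion (hrange r hr) rfl
  obtain ⟨a, -, ha⟩ := (Ultrafilter.finite_biUnion_mem_iff hT).mp hmem
  exact ⟨a, ha⟩

end Aux18

/-- Lemma A.2, neighborhoods determine the complex.
If `(X₁, σ₁)` and `(X₂, σ₂)` are `d`-dimensionally connected `(d-1)`-rooted
simplicial complexes, locally finite above dimension `d-1`, and
`B_{X₁}(σ₁; r) ≅ B_{X₂}(σ₂; r)` for every radius `r ≥ 0`, then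
`(X₁, σ₁) ≅ (X₂, σ₂)`. -/
theorem neighborhoods_determine_complex
    {V W : Type*} (d : ℕ) (hd : 1 ≤ d)
    (X₁ : SComplex V) (σ₁ : Finset V) (X₂ : SComplex W) (σ₂ : Finset W)
    (hroot₁ : σ₁ ∈ simplices X₁ (d - 1)) (hroot₂ : σ₂ ∈ simplices X₂ (d - 1))
    (hlf₁ : LocallyFinite X₁ d) (hlf₂ : LocallyFinite X₂ d)
    (hconn₁ : DConnected X₁ d) (hconn₂ : DConnected X₂ d)
    (hballs : ∀ r : ℕ,
      Iso (⟨ball X₁ d σ₁ r, σ₁⟩ : Rooted V) (⟨ball X₂ d σ₂ r, σ₂⟩ : Rooted W)) :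
    Iso (⟨X₁, σ₁⟩ : Rooted V) (⟨X₂, σ₂⟩ : Rooted W) := by
  classical
  have hb : ∀ r : ℕ, ∃ φ : V → W,
      Set.InjOn φ {v | ({v} : Finset V) ∈ (ball X₁ d σ₁ r).faces} ∧
      (∀ ρ ∈ (ball X₁ d σ₁ r).faces, ρ.image φ ∈ (ball X₂ d σ₂ r).faces) ∧
      (∀ τ ∈ (ball X₂ d σ₂ r).faces, ∃ ρ ∈ (ball X₁ d σ₁ r).faces, ρ.image φ = τ) ∧
      σ₁.image φ = σ₂ := hballs
  choose φ hinj hfwd hsurj hroot using hb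
  have K : ∀ r s, s ≤ r →
      (∀ ρ ∈ (ball X₁ d σ₁ s).faces, ρ.image (φ r) ∈ (ball X₂ d σ₂ s).faces) ∧
      (∀ τ ∈ (ball X₂ d σ₂ s).faces, ∃ ρ ∈ (ball X₁ d σ₁ s).faces, ρ.image (φ r) = τ) :=
    fun r => iso_ball_restrict hd X₁ σ₁ X₂ σ₂ r (φ r) (hinj r) (hfwd r) (hsurj r)
      (hroot r) hroot₁
  obtain ⟨U, hU⟩ := Ultrafilter.exists_le (Filter.atTop : Filter ℕ)
  have hUge : ∀ s : ℕ, {r | s ≤ r} ∈ U := fun s => hU (Filter.mem_atTop s)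
  have hrad₁ : ∀ ρ ∈ X₁.faces, ∃ r, ρ ∈ ballFaces X₁ d σ₁ r :=
    exists_ball_radius hd X₁ σ₁ hroot₁ hconn₁
  have hrad₂ : ∀ τ ∈ X₂.faces, ∃ r, τ ∈ ballFaces X₂ d σ₂ r :=
    exists_ball_radius hd X₂ σ₂ hroot₂ hconn₂
  -- eventual constancy of the vertex images
  have hconst : ∀ v : V, ({v} : Finset V) ∈ X₁.faces → ∃ w, {r | φ r v = w} ∈ U := by
    intro v hv
    obtain ⟨s, hs⟩ := hrad₁ {v} hv
    refine ultra_const U (fun r => φ r v) (hUge s)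
      (ballVerts_finite X₂ hd σ₂ hlf₂ s) ?_
    intro r hr
    have h := (K r s hr).1 {v} ⟨hv, hs⟩
    rwa [Finset.image_singleton] at h
  set Φ : V → W := fun v =>
    if h : ∃ w, {r | φ r v = w} ∈ U then h.choose else φ 0 v with hΦdef
  have hΦ : ∀ v : V, ({v} : Finset V) ∈ X₁.faces → {r | φ r v = Φ v} ∈ U := by
    intro v hv
    have h := hconst v hv
    have heq : Φ v = h.choose := by rw [hΦdef]; exact dif_pos h
    rw [heq]
    exact h.choose_spec
  have hagreeU : ∀ t : Finset V, (∀ v ∈ t, ({v} : Finset V) ∈ X₁.faces) →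
      (⋂ v ∈ t, {r | φ r v = Φ v}) ∈ U := fun t ht =>
    (Filter.biInter_finset_mem t).mpr fun v hv => hΦ v (ht v hv)
  refine ⟨Φ, ?_, ?_, ?_, ?_⟩
  · -- injectivity
    intro u hu v hv huv
    obtain ⟨su, hsu⟩ := hrad₁ {u} hu
    obtain ⟨sv, hsv⟩ := hrad₁ {v} hv
    have hmem : ({r | max su sv ≤ r} ∩ ⋂ x ∈ ({u, v} : Finset V), {r | φ r x = Φ x}) ∈ U :=
      Filter.inter_mem (hUge (max su sv)) (hagreeU {u, v} (by
        intro x hx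
        rcases Finset.mem_insert.mp hx with h | h
        · rwa [h]
        · rw [Finset.mem_singleton.mp h]; exact hv))
    obtain ⟨r, hr1, hr2⟩ := Ultrafilter.nonempty_of_mem hmem
    have hag : ∀ x ∈ ({u, v} : Finset V), φ r x = Φ x := by
      intro x hx
      exact Set.mem_iInter₂.mp hr2 x hx
    have hru : φ r u = Φ u := hag u (Finset.mem_insert_self u {v})
    have hrv : φ r v = Φ v := hag v (by simp)
    refine hinj r ?_ ?_ ?_
    · exact ⟨hu, ballFaces_mono X₁ d σ₁ (le_trans (le_max_left su sv) hr1) hsu⟩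
    · exact ⟨hv, ballFaces_mono X₁ d σ₁ (le_trans (le_max_right su sv) hr1) hsv⟩
    · rw [hru, hrv]; exact huv
  · -- faces are mapped to faces
    intro ρ hρ
    obtain ⟨s, hs⟩ := hrad₁ ρ hρ
    have hverts : ∀ v ∈ ρ, ({v} : Finset V) ∈ X₁.faces := fun v hv =>
      X₁.down_closed ρ hρ {v} (Finset.singleton_subset_iff.mpr hv)
        (Finset.singleton_nonempty v)
    have hmem : ({r | s ≤ r} ∩ ⋂ v ∈ ρ, {r | φ r v = Φ v}) ∈ U :=
      Filter.inter_mem (hUge s) (hagreeU ρ hverts)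
    obtain ⟨r, hr1, hr2⟩ := Ultrafilter.nonempty_of_mem hmem
    have himg : ρ.image Φ = ρ.image (φ r) :=
      Finset.image_congr fun v hv => (Set.mem_iInter₂.mp hr2 v hv).symm
    rw [himg]
    exact (hfwd r ρ ⟨hρ, ballFaces_mono X₁ d σ₁ hr1 hs⟩).1
  · -- surjectivity on faces
    intro τ hτ
    obtain ⟨s, hs⟩ := hrad₂ τ hτ
    set ψ : ℕ → Finset V := fun r =>
      if h : ∃ ρ ∈ (ball X₁ d σ₁ s).faces, ρ.image (φ r) = τ then h.choose else ∅
      with hψdef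
    have hψ : ∀ r, s ≤ r → ψ r ∈ (ball X₁ d σ₁ s).faces ∧ (ψ r).image (φ r) = τ := by
      intro r hr
      have hx : ∃ ρ ∈ (ball X₁ d σ₁ s).faces, ρ.image (φ r) = τ :=
        (K r s hr).2 τ ⟨hτ, hs⟩
      have heq : ψ r = hx.choose := by rw [hψdef]; exact dif_pos hx
      rw [heq]
      exact hx.choose_spec
    obtain ⟨ρ₀, hρ₀U⟩ := ultra_const U ψ (hUge s)
      ((ballFaces_finite X₁ hd σ₁ hlf₁ s).subset
        (Set.inter_subset_right (s := X₁.faces)))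
      (fun r hr => (hψ r hr).1)
    have hmem₁ : ({r | s ≤ r} ∩ {r | ψ r = ρ₀}) ∈ U :=
      Filter.inter_mem (hUge s) hρ₀U
    obtain ⟨r₁, hr₁s, hr₁ψ⟩ := Ultrafilter.nonempty_of_mem hmem₁
    have hρ₀faces : ρ₀ ∈ (ball X₁ d σ₁ s).faces := hr₁ψ ▸ (hψ r₁ hr₁s).1
    have hverts : ∀ v ∈ ρ₀, ({v} : Finset V) ∈ X₁.faces := fun v hv =>
      X₁.down_closed ρ₀ hρ₀faces.1 {v} (Finset.singleton_subset_iff.mpr hv)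
        (Finset.singleton_nonempty v)
    have hmem₂ : (({r | s ≤ r} ∩ {r | ψ r = ρ₀}) ∩ ⋂ v ∈ ρ₀, {r | φ r v = Φ v}) ∈ U :=
      Filter.inter_mem hmem₁ (hagreeU ρ₀ hverts)
    obtain ⟨r, ⟨hrs, hrψ⟩, hr2⟩ := Ultrafilter.nonempty_of_mem hmem₂
    refine ⟨ρ₀, hρ₀faces.1, ?_⟩
    have himg : ρ₀.image Φ = ρ₀.image (φ r) :=
      Finset.image_congr fun v hv => (Set.mem_iInter₂.mp hr2 v hv).symm
    rw [himg, ← hrψ]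
    exact (hψ r hrs).2
  · -- the root is mapped to the root
    have hverts : ∀ v ∈ σ₁, ({v} : Finset V) ∈ X₁.faces := fun v hv =>
      X₁.down_closed σ₁ hroot₁.1 {v} (Finset.singleton_subset_iff.mpr hv)
        (Finset.singleton_nonempty v)
    obtain ⟨r, hr⟩ := Ultrafilter.nonempty_of_mem (hagreeU σ₁ hverts)
    have himg : σ₁.image Φ = σ₁.image (φ r) :=
      Finset.image_congr fun v hv => (Set.mem_iInter₂.mp hr v hv).symm
    rw [himg]
    exact hroot r

end RSC
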